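/- Let ℓ ≥ 2 and let τ : ℝ/ℤ → ℝ be α-Hölder with Hölder constant C, ∫τ = 0, and suppose τ is not cohomologous to 0 (i.e. there is no continuous μ with τ = μ∘m_ℓ - μ). Then there exists a point θ₊ ∈ ℝ/ℤ periodic of some period p under multiplication by ℓ such that τ(θ₊) + τ(ℓθ₊) + ⋯ + τ(ℓ^{p-1}θ₊) > 0, and likewise a periodic point θ₋ whose Birkhoff sum along its orbit is strictly negative. -/

import Mathlib

open MeasureTheory

namespace Stmt17Aux

lemma coe_zsmul' (m : ℤ) (t : ℝ) : m • (↑t : UnitAddCircle) = ↑((m : ℝ) * t) := by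
  rw [← AddCircle.coe_zsmul]; norm_num

lemma dist_coe_le (a b : ℝ) : dist (↑a : UnitAddCircle) ↑b ≤ |a - b| := by
  rw [dist_eq_norm, ← AddCircle.coe_sub, UnitAddCircle.norm_eq]
  rcases le_or_gt (1/2) |a - b| with h | h
  · exact (abs_sub_round _).trans h
  · rw [round_eq_zero_iff.mpr (by
      rw [Set.mem_Ico]
      exact ⟨by linarith [neg_abs_le (a-b)], by linarith [le_abs_self (a-b)]⟩)]
    simp

lemma exists_lift (x : ℝ) (θ' : UnitAddCircle) :
    ∃ δ : ℝ, (↑(x + δ) : UnitAddCircle) = θ' ∧ |δ| = dist (↑x : UnitAddCircle) θ' := by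
  obtain ⟨w, hw⟩ := QuotientAddGroup.mk_surjective (θ' - ((x : ℝ) : UnitAddCircle))
  refine ⟨w - round w, ?_, ?_⟩
  · have h0 : (↑((round w : ℝ)) : UnitAddCircle) = 0 :=
      (AddCircle.coe_eq_zero_iff 1).mpr ⟨round w, by simp⟩
    have : (↑(w - round w) : UnitAddCircle) = θ' - ((x : ℝ) : UnitAddCircle) := by
      rw [AddCircle.coe_sub, h0, sub_zero]; exact hw
    rw [AddCircle.coe_add, this]; abel
  · rw [dist_comm, dist_eq_norm, ← hw, UnitAddCircle.norm_eq]

lemma geom_bound (r : ℝ) (h0 : 0 ≤ r) (h1 : r < 1) (n : ℕ) :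
    ∑ j ∈ Finset.range n, r ^ (n - j) ≤ r / (1 - r) := by
  have hre : ∑ j ∈ Finset.range n, r ^ (n - j) = r * ∑ j ∈ Finset.range n, r ^ j := by
    rw [Finset.mul_sum]
    rw [← Finset.sum_range_reflect (fun j => r ^ (n - j)) n]
    refine Finset.sum_congr rfl fun j hj => ?_
    rw [Finset.mem_range] at hj
    rw [← pow_succ']
    congr 1
    omega
  rw [hre, div_eq_mul_inv]
  refine mul_le_mul_of_nonneg_left ?_ h0
  calc ∑ j ∈ Finset.range n, r ^ j ≤ ∑' j : ℕ, r ^ j :=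
        Summable.sum_le_tsum _ (fun i _ => pow_nonneg h0 i) (summable_geometric_of_lt_one h0 h1)
    _ = (1 - r)⁻¹ := tsum_geometric_of_lt_one h0 h1

lemma rpow_inv_pow (L : ℝ) (hL : 0 < L) (a : ℝ) (k : ℕ) :
    ((L ^ k)⁻¹) ^ a = ((L ^ a)⁻¹) ^ k := by
  rw [← Real.rpow_natCast L k, ← Real.inv_rpow hL.le, ← Real.rpow_natCast ((L ^ a)⁻¹) k,
    ← Real.inv_rpow hL.le, ← Real.rpow_mul (inv_nonneg.mpr hL.le),
    ← Real.rpow_mul (inv_nonneg.mpr hL.le), mul_comm]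

noncomputable def birk (ℓ : ℕ) (τ : UnitAddCircle → ℝ) (n : ℕ) (t : ℝ) : ℝ :=
  ∑ j ∈ Finset.range n, τ ↑((ℓ:ℝ)^j * t)

noncomputable def muF (ℓ : ℕ) (τ : UnitAddCircle → ℝ) (θ : UnitAddCircle) : ℝ :=
  sSup { s | ∃ n t, ((((ℓ:ℝ)^n * t : ℝ)) : UnitAddCircle) = θ ∧ s = birk ℓ τ n t }

lemma birk_diff (ℓ : ℕ) (hℓ : 2 ≤ ℓ) (τ : UnitAddCircle → ℝ) (α C : NNReal) (hα : 0 < α)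
    (hτ : HolderWith C α τ) (n : ℕ) (t t' : ℝ) :
    |birk ℓ τ n t - birk ℓ τ n t'| ≤
      (C * (((ℓ:ℝ) ^ (α:ℝ))⁻¹ / (1 - ((ℓ:ℝ) ^ (α:ℝ))⁻¹))) *
        ((ℓ:ℝ)^n * |t - t'|) ^ (α:ℝ) := by
  set L : ℝ := (ℓ:ℝ) with hLdef
  have hL : 1 < L := by rw [hLdef]; exact_mod_cast Nat.lt_of_lt_of_le one_lt_two hℓ
  have hL0 : 0 < L := lt_trans one_pos hL
  set r : ℝ := (L ^ (α:ℝ))⁻¹ with hrdef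
  have hr0 : 0 < r := by positivity
  have hr1 : r < 1 := by
    rw [hrdef, inv_lt_one_iff₀]
    right
    exact Real.one_lt_rpow_iff_of_pos hL0 |>.mpr (Or.inl ⟨hL, by exact_mod_cast hα⟩)
  set D : ℝ := (L^n * |t - t'|) ^ (α:ℝ) with hDdef
  have hD0 : 0 ≤ D := Real.rpow_nonneg (by positivity) _
  have hterm : ∀ j ∈ Finset.range n,
      |τ ↑(L^j * t) - τ ↑(L^j * t')| ≤ (C * D) * r ^ (n - j) := by
    intro j hj
    rw [Finset.mem_range] at hj
    have hdist : dist (↑(L^j * t) : UnitAddCircle) ↑(L^j * t') ≤ (L^j / L^n) * (L^n * |t - t'|) := by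
      refine (dist_coe_le _ _).trans ?_
      rw [← mul_sub, abs_mul, abs_of_nonneg (by positivity : (0:ℝ) ≤ L^j)]
      rw [div_mul_eq_mul_div, mul_comm (L^j), mul_div_assoc, mul_comm (L^n),
        mul_div_assoc, div_self (by positivity : (L:ℝ)^n ≠ 0), mul_one, mul_comm]
    have hdd : dist (↑(L^j * t) : UnitAddCircle) ↑(L^j * t') ^ (α:ℝ) ≤ r ^ (n - j) * D := by
      calc dist (↑(L^j * t) : UnitAddCircle) ↑(L^j * t') ^ (α:ℝ)
          ≤ ((L^j / L^n) * (L^n * |t - t'|)) ^ (α:ℝ) :=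
            Real.rpow_le_rpow dist_nonneg hdist (le_of_lt (by exact_mod_cast hα))
        _ = (L^j / L^n) ^ (α:ℝ) * D := Real.mul_rpow (by positivity) (by positivity)
        _ = r ^ (n - j) * D := by
            congr 1
            have hjd : L^j / L^n = (L ^ (n - j))⁻¹ := by
              have hn : L^n = L^j * L^(n - j) := by
                rw [← pow_add]
                congr 1
                omega
              rw [hn]
              rw [div_mul_eq_div_div, div_self (by positivity : (L:ℝ)^j ≠ 0), one_div]
            rw [hjd, rpow_inv_pow L hL0]
    calc |τ ↑(L^j * t) - τ ↑(L^j * t')|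
        = dist (τ ↑(L^j * t)) (τ ↑(L^j * t')) := (Real.dist_eq _ _).symm
      _ ≤ C * dist (↑(L^j * t) : UnitAddCircle) ↑(L^j * t') ^ (α:ℝ) := hτ.dist_le _ _
      _ ≤ C * (r ^ (n - j) * D) := by
          exact mul_le_mul_of_nonneg_left hdd (by positivity)
      _ = (C * D) * r ^ (n - j) := by ring
  calc |birk ℓ τ n t - birk ℓ τ n t'|
      = |∑ j ∈ Finset.range n, (τ ↑(L^j * t) - τ ↑(L^j * t'))| := by
        rw [Finset.sum_sub_distrib]; rfl
    _ ≤ ∑ j ∈ Finset.range n, |τ ↑(L^j * t) - τ ↑(L^j * t')| :=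
        Finset.abs_sum_le_sum_abs _ _
    _ ≤ ∑ j ∈ Finset.range n, (C * D) * r ^ (n - j) := Finset.sum_le_sum hterm
    _ = (C * D) * ∑ j ∈ Finset.range n, r ^ (n - j) := by rw [Finset.mul_sum]
    _ ≤ (C * D) * (r / (1 - r)) := by
        exact mul_le_mul_of_nonneg_left (geom_bound r hr0.le hr1 n) (by positivity)
    _ = (C * (r / (1 - r))) * D := by ring

lemma keyLemma (ℓ : ℕ) (hℓ : 2 ≤ ℓ) (τ : UnitAddCircle → ℝ)
    (α C : NNReal) (hα : 0 < α) (hτ : HolderWith C α τ)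
    (hint : ∫ θ : UnitAddCircle, τ θ = 0)
    (hper : ∀ (θ : UnitAddCircle) (p : ℕ), 0 < p → ((ℓ:ℤ)^p) • θ = θ →
      ∑ i ∈ Finset.range p, τ (((ℓ:ℤ)^i) • θ) ≤ 0) :
    ∃ μ : UnitAddCircle → ℝ, Continuous μ ∧ ∀ θ, τ θ = μ ((ℓ:ℤ) • θ) - μ θ := by
  set L : ℝ := (ℓ:ℝ) with hLdef
  have hL : 1 < L := by rw [hLdef]; exact_mod_cast Nat.lt_of_lt_of_le one_lt_two hℓ
  have hL0 : 0 < L := lt_trans one_pos hL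
  have hα' : (0:ℝ) < (α:ℝ) := by exact_mod_cast hα
  set r : ℝ := (L ^ (α:ℝ))⁻¹ with hrdef
  have hr0 : 0 < r := by positivity
  have hr1 : r < 1 := by
    rw [hrdef, inv_lt_one_iff₀]
    right
    exact Real.one_lt_rpow_iff_of_pos hL0 |>.mpr (Or.inl ⟨hL, hα'⟩)
  set K : ℝ := (C:ℝ) * (r / (1 - r)) with hKdef
  have hK0 : 0 ≤ K := by
    have : 0 ≤ r / (1 - r) := div_nonneg hr0.le (by linarith)
    positivity
  set A : UnitAddCircle → Set ℝ :=
    fun θ => { s | ∃ n t, (((L^n * t : ℝ)) : UnitAddCircle) = θ ∧ s = birk ℓ τ n t } with hAdef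
  have hbirk_eq : ∀ (p : ℕ) (y : ℝ),
      ∑ i ∈ Finset.range p, τ (((ℓ:ℤ)^i) • (↑y : UnitAddCircle)) = birk ℓ τ p y := by
    intro p y
    refine Finset.sum_congr rfl fun i _ => ?_
    rw [coe_zsmul']
    congr 1
    push_cast
    rfl
  -- upper bound on all chain sums
  have hbound : ∀ (n : ℕ) (t : ℝ), birk ℓ τ n t ≤ K := by
    intro n t
    rcases Nat.eq_zero_or_pos n with rfl | hn
    · simp [birk, hK0]
    · set N : ℝ := L^n with hNdef
      have hNpos : 0 < N := by positivity
      have hN2 : 2 ≤ N := by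
        have h2L : (2:ℝ) ≤ L := by rw [hLdef]; exact_mod_cast hℓ
        calc (2:ℝ) ≤ L := h2L
          _ ≤ L^n := le_self_pow₀ hL.le hn.ne'
      have hN1 : 0 < N - 1 := by linarith
      set M : ℤ := round (t * (N - 1)) with hMdef
      set y : ℝ := M / (N - 1) with hydef
      have hy_close : |t - y| ≤ N⁻¹ := by
        have h1 : t - y = (t * (N-1) - M) / (N - 1) := by
          rw [hydef]
          field_simp
        have h2 : |t * (N-1) - M| ≤ 1/2 := abs_sub_round _
        have hinv : N⁻¹ * (N - 1) = 1 - N⁻¹ := by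
          rw [mul_sub, inv_mul_cancel₀ hNpos.ne', mul_one]
        have hNi : N⁻¹ ≤ 1/2 := by
          rw [inv_le_comm₀ hNpos (by norm_num)]
          linarith
        rw [h1, abs_div, abs_of_pos hN1, div_le_iff₀ hN1]
        calc |t * (N-1) - M| ≤ 1/2 := h2
          _ ≤ N⁻¹ * (N - 1) := by rw [hinv]; linarith
      have hy_per : ((ℓ:ℤ)^n) • (↑y : UnitAddCircle) = ↑y := by
        rw [coe_zsmul']
        have hcast : (((ℓ:ℤ)^n : ℤ) : ℝ) = N := by rw [hNdef, hLdef]; push_cast; rfl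
        rw [hcast]
        have hint' : N * y - y = M := by
          rw [hydef]
          field_simp
        have h0 : ((N * y - y : ℝ) : UnitAddCircle) = 0 :=
          (AddCircle.coe_eq_zero_iff 1).mpr ⟨M, by rw [hint']; simp⟩
        have : (N * y : ℝ) = y + (N * y - y) := by ring
        rw [this, AddCircle.coe_add, h0, add_zero]
      have hsum_y : birk ℓ τ n y ≤ 0 := by
        rw [← hbirk_eq]
        exact hper _ n hn hy_per
      have hdiff := birk_diff ℓ hℓ τ α C hα hτ n t y
      have h1 : L^n * |t - y| ≤ 1 := by
        calc L^n * |t - y| ≤ L^n * N⁻¹ :=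
              mul_le_mul_of_nonneg_left hy_close (by positivity)
          _ = 1 := by rw [hNdef]; exact mul_inv_cancel₀ (by positivity)
      have h2 : (L^n * |t - y|) ^ (α:ℝ) ≤ 1 :=
        Real.rpow_le_one (by positivity) h1 hα'.le
      have h3 := le_abs_self (birk ℓ τ n t - birk ℓ τ n y)
      rw [← hLdef, ← hrdef, ← hKdef] at hdiff
      nlinarith [hK0, h2, h3, hsum_y, hdiff]
  have hA_ne : ∀ θ, (A θ).Nonempty := by
    intro θ
    obtain ⟨t, ht⟩ := QuotientAddGroup.mk_surjective θ
    exact ⟨birk ℓ τ 0 t, 0, t, by rw [pow_zero, one_mul]; exact ht, rfl⟩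
  have hA_bdd : ∀ θ, BddAbove (A θ) := by
    intro θ
    exact ⟨K, by rintro s ⟨n, t, -, rfl⟩; exact hbound n t⟩
  set μ : UnitAddCircle → ℝ := fun θ => sSup (A θ) with hμdef
  have hle : ∀ θ s, s ∈ A θ → s ≤ μ θ := fun θ s hs => le_csSup (hA_bdd θ) hs
  have hstep : ∀ θ, τ θ + μ θ ≤ μ ((ℓ:ℤ) • θ) := by
    intro θ
    have h : μ θ ≤ μ ((ℓ:ℤ) • θ) - τ θ := by
      apply csSup_le (hA_ne θ)
      rintro s ⟨n, t, ht, rfl⟩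
      have hmem : birk ℓ τ n t + τ θ ∈ A ((ℓ:ℤ) • θ) := by
        refine ⟨n+1, t, ?_, ?_⟩
        · rw [← ht, coe_zsmul']
          congr 1
          push_cast
          ring
        · rw [show birk ℓ τ (n+1) t = birk ℓ τ n t + τ ↑((ℓ:ℝ)^n * t) from
            Finset.sum_range_succ _ n]
          rw [show ((((ℓ:ℝ))^n * t : ℝ) : UnitAddCircle) = θ from ht]
      linarith [hle _ _ hmem]
    linarith
  have hlip : ∀ θ θ', μ θ ≤ μ θ' + K * dist θ θ' ^ (α:ℝ) := by
    intro θ θ'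
    apply csSup_le (hA_ne θ)
    rintro s ⟨n, t, ht, rfl⟩
    obtain ⟨δ, hδ1, hδ2⟩ := exists_lift (L^n * t) θ'
    rw [show (((L^n * t : ℝ)) : UnitAddCircle) = θ from ht] at hδ2
    set t' : ℝ := t + δ / L^n with ht'def
    have hLn : (L:ℝ)^n ≠ 0 := by positivity
    have hmul : L^n * t' = L^n * t + δ := by
      rw [ht'def]
      field_simp
    have hmem : birk ℓ τ n t' ∈ A θ' := ⟨n, t', by rw [hmul]; exact hδ1, rfl⟩
    have hdiff := birk_diff ℓ hℓ τ α C hα hτ n t t'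
    have htt' : L^n * |t - t'| = |δ| := by
      have h1 : t - t' = -(δ / L^n) := by rw [ht'def]; ring
      rw [h1, abs_neg, abs_div, abs_of_pos (by positivity : (0:ℝ) < L^n)]
      field_simp
    rw [← hLdef, ← hrdef, ← hKdef] at hdiff
    rw [htt', hδ2] at hdiff
    have h3 := le_abs_self (birk ℓ τ n t - birk ℓ τ n t')
    linarith [hle _ _ hmem]
  have habs : ∀ θ θ', |μ θ - μ θ'| ≤ K * dist θ θ' ^ (α:ℝ) := by
    intro θ θ'
    rw [abs_sub_le_iff]
    constructor
    · linarith [hlip θ θ']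
    · rw [dist_comm]
      linarith [hlip θ' θ]
  have hcont : Continuous μ := by
    rw [continuous_iff_continuousAt]
    intro θ₀
    have h1 : Filter.Tendsto (fun θ : UnitAddCircle => dist θ θ₀) (nhds θ₀) (nhds 0) := by
      simpa using (continuous_id.dist (continuous_const (y := θ₀))).tendsto θ₀
    have h2 : ContinuousAt (fun x : ℝ => K * x ^ (α:ℝ)) 0 :=
      continuousAt_const.mul (Real.continuousAt_rpow_const 0 _ (Or.inr hα'.le))
    have htend : Filter.Tendsto (fun θ : UnitAddCircle => K * dist θ θ₀ ^ (α:ℝ))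
        (nhds θ₀) (nhds 0) := by
      have := h2.tendsto.comp h1
      simpa [Function.comp_def, Real.zero_rpow hα'.ne'] using this
    have hsq : Filter.Tendsto (fun θ => |μ θ - μ θ₀|) (nhds θ₀) (nhds 0) :=
      squeeze_zero (fun θ => abs_nonneg _) (fun θ => habs θ θ₀) htend
    have : Filter.Tendsto μ (nhds θ₀) (nhds (μ θ₀)) := by
      rw [tendsto_iff_dist_tendsto_zero]
      simpa [Real.dist_eq] using hsq
    exact this
  -- integration step
  have hτc : Continuous τ := hτ.continuous hα
  have hmc : Continuous (fun θ : UnitAddCircle => (ℓ:ℤ) • θ) := continuous_zsmul _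
  set g : UnitAddCircle → ℝ := fun θ => μ ((ℓ:ℤ) • θ) - μ θ - τ θ with hgdef
  have hgc : Continuous g := ((hcont.comp hmc).sub hcont).sub hτc
  have hgnn : ∀ θ, 0 ≤ g θ := fun θ => by
    have := hstep θ
    simp only [hgdef]
    linarith
  have hintc : ∀ f : UnitAddCircle → ℝ, Continuous f → Integrable f volume := by
    intro f hf
    rw [← integrableOn_univ]
    exact hf.continuousOn.integrableOn_compact isCompact_univ
  have hmp : MeasurePreserving (fun θ : UnitAddCircle => (ℓ:ℤ) • θ) volume volume :=
    (AddCircle.ergodic_zsmul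
      (by rw [abs_of_nonneg (by positivity)]; exact_mod_cast hℓ)).toMeasurePreserving
  have hcomp : ∫ θ : UnitAddCircle, μ ((ℓ:ℤ) • θ) = ∫ θ : UnitAddCircle, μ θ := by
    have := integral_map (φ := fun θ : UnitAddCircle => (ℓ:ℤ) • θ) (f := μ)
        hmp.measurable.aemeasurable (by rw [hmp.map_eq]; exact hcont.aestronglyMeasurable)
    rw [hmp.map_eq] at this
    exact this.symm
  have hi1 : Integrable (fun θ : UnitAddCircle => μ ((ℓ:ℤ) • θ)) volume :=
    hintc _ (hcont.comp hmc)
  have hi2 : Integrable (fun θ : UnitAddCircle => μ θ) volume := hintc _ hcont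
  have hi3 : Integrable (fun θ : UnitAddCircle => τ θ) volume := hintc _ hτc
  have hig : ∫ θ : UnitAddCircle, g θ = 0 := by
    have e1 : ∫ θ : UnitAddCircle, ((fun θ : UnitAddCircle => μ ((ℓ:ℤ) • θ)) θ -
        (fun θ : UnitAddCircle => μ θ) θ) - (fun θ : UnitAddCircle => τ θ) θ =
        (∫ θ : UnitAddCircle, ((fun θ : UnitAddCircle => μ ((ℓ:ℤ) • θ)) θ -
          (fun θ : UnitAddCircle => μ θ) θ)) - ∫ θ : UnitAddCircle, τ θ :=
      integral_sub (hi1.sub hi2) hi3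
    have e2 : ∫ θ : UnitAddCircle, ((fun θ : UnitAddCircle => μ ((ℓ:ℤ) • θ)) θ -
        (fun θ : UnitAddCircle => μ θ) θ) =
        (∫ θ : UnitAddCircle, μ ((ℓ:ℤ) • θ)) - ∫ θ : UnitAddCircle, μ θ :=
      integral_sub hi1 hi2
    simp only [hgdef]
    simp only at e1 e2
    rw [e1, e2, hcomp, hint]
    ring
  have hg0 : g = 0 := by
    refine (hgc.ae_eq_iff_eq volume continuous_const).mp ?_
    exact (integral_eq_zero_iff_of_nonneg hgnn (hintc _ hgc)).mp hig
  refine ⟨μ, hcont, fun θ => ?_⟩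
  have h := congrFun hg0 θ
  simp only [hgdef, Pi.zero_apply] at h
  linarith


end Stmt17Aux

theorem stmt17 (ℓ : ℕ) (hℓ : 2 ≤ ℓ) (τ : UnitAddCircle → ℝ)
    (α C : NNReal) (hα : 0 < α) (hτ : HolderWith C α τ)
    (hint : ∫ θ : UnitAddCircle, τ θ = 0)
    (hnc : ¬ ∃ μ : UnitAddCircle → ℝ, Continuous μ ∧
      ∀ θ, τ θ = μ ((ℓ : ℤ) • θ) - μ θ) :
    (∃ (θp : UnitAddCircle) (p : ℕ), 0 < p ∧ ((ℓ : ℤ) ^ p) • θp = θp ∧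
      0 < ∑ i ∈ Finset.range p, τ (((ℓ : ℤ) ^ i) • θp)) ∧
    (∃ (θm : UnitAddCircle) (p : ℕ), 0 < p ∧ ((ℓ : ℤ) ^ p) • θm = θm ∧
      ∑ i ∈ Finset.range p, τ (((ℓ : ℤ) ^ i) • θm) < 0) := by
  have hτneg : HolderWith C α (fun θ => -τ θ) := fun x y => by
    simpa [edist_neg_neg] using hτ x y
  constructor
  · by_contra h
    push_neg at h
    exact hnc (Stmt17Aux.keyLemma ℓ hℓ τ α C hα hτ hint h)
  · by_contra h
    push_neg at h
    obtain ⟨ν, hνc, hν⟩ := Stmt17Aux.keyLemma ℓ hℓ (fun θ => -τ θ) α C hα hτneg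
      (by rw [integral_neg, hint, neg_zero])
      (by
        intro θ p hp hper
        have := h θ p hp hper
        simp only [Finset.sum_neg_distrib]
        linarith)
    exact hnc ⟨fun θ => -ν θ, hνc.neg, fun θ => by have := hν θ; show τ θ = -ν ((ℓ:ℤ) • θ) - -ν θ; linarith⟩
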